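/- Let λ be a typed k-strict partition with λ_i + λ_j < 2k + j − i for all i < j. Then H_λ(x;y) equals: S_λ(x;y) if λ_1 < k; (S_λ + e_k(y) S_{λ−k})/2 if type(λ) = 1; (S_λ − e_k(y) S_{λ−k})/2 if type(λ) = 2; and S_λ/2 if λ_1 > k; where S_μ(x;y) = det(ϑ_{μ_i + j − i})_{i,j} and λ−k is λ with one part k removed. -/

import Mathlib

/-!
STATEMENT 12 (Proposition `propSQ`(a)).  Let `λ` be a typed `k`-strict partition
(of length `ℓ = L+1`) with `λ_i + λ_j < 2k + j - i` for all `i < j`.  Then the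
eta polynomial `H_λ = 2^{-ℓ_k(λ)} R^λ ⋆ ϑ_λ` equals `S_λ` if `λ_1 < k`;
`(S_λ + e_k(y) S_{λ-k})/2` if `type(λ) = 1`; `(S_λ - e_k(y) S_{λ-k})/2` if
`type(λ) = 2`; and `S_λ/2` if `λ_1 > k`, where `S_μ = det(ϑ_{μ_i + j - i})`.

The identity is formal: it holds in any commutative ring containing ℚ for any
family `ϑ : ℤ → R` with `ϑ_r = 0` for `r < 0`, with `η_k = (ϑ_k + e_k)/2` and
`η'_k = (ϑ_k - e_k)/2`.  `R^λ ⋆ ϑ_λ` is expanded as a sum over exponent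
matrices: monomials involving the index `d` of the part `k` contribute
`(1/2)ϑ_{Rλ}`, the others contribute `η_k ϑ_{\widehat{Rλ}}` (type 1) resp.
`η'_k ϑ_{\widehat{Rλ}}` (type 2), where the hat removes the `d`-th entry.
-/

namespace Stmt12

noncomputable section

variable {R : Type*} [CommRing R] [Algebra ℚ R]

def rapply {L : ℕ} (nn : Fin L → Fin L → ℕ) (lam : Fin L → ℤ) : Fin L → ℤ :=
  fun p => lam p + (∑ j, (nn p j : ℤ)) - ∑ h, (nn h p : ℤ)

def pairCoef {L : ℕ} (D : Finset (Fin L × Fin L)) (i j : Fin L) (m : ℕ) : ℚ :=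
  if i < j then
    (if (i, j) ∈ D then (if m = 0 then 1 else 2 * (-1 : ℚ) ^ m)
     else (if m = 0 then 1 else if m = 1 then -1 else 0))
  else (if m = 0 then 1 else 0)

def coefRD {L : ℕ} (D : Finset (Fin L × Fin L)) (nn : Fin L → Fin L → ℕ) : ℚ :=
  ∏ i, ∏ j, pairCoef D i j (nn i j)

/-- the set of pairs `i < j` with `λ_i + λ_j ≥ 2k + j - i`. -/
def Dlam {L : ℕ} (k : ℕ) (lam : Fin (L + 1) → ℕ) :
    Finset (Fin (L + 1) × Fin (L + 1)) :=
  Finset.univ.filter fun q => q.1 < q.2 ∧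
    2 * k + (q.2 : ℕ) ≤ lam q.1 + lam q.2 + (q.1 : ℕ)

/-- `ℓ_k(λ)`: the number of parts of `λ` strictly greater than `k`. -/
def lk {L : ℕ} (k : ℕ) (lam : Fin (L + 1) → ℕ) : ℕ :=
  (Finset.univ.filter fun i => k < lam i).card

/-- the value of the star operation on the raising-operator monomial with
exponent matrix `nn`. -/
def starval {L : ℕ} (theta : ℤ → R) (etak eta'k : R)
    (t : ℕ) (d : Fin (L + 1)) (lam : Fin (L + 1) → ℕ)
    (nn : Fin (L + 1) → Fin (L + 1) → ℕ) : R :=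
  if t = 0 then ∏ i, theta (rapply nn (fun i => (lam i : ℤ)) i)
  else if (∃ j, nn d j ≠ 0) ∨ (∃ i, nn i d ≠ 0) then
    (1 / 2 : ℚ) • ∏ i, theta (rapply nn (fun i => (lam i : ℤ)) i)
  else
    (if t = 1 then etak else eta'k) *
      ∏ i : Fin L, theta (rapply nn (fun i => (lam i : ℤ)) (d.succAbove i))

/-- the eta polynomial `H_λ = 2^{-ℓ_k(λ)} R^λ ⋆ ϑ_λ`. -/
def H {L : ℕ} (k : ℕ) (theta : ℤ → R) (etak eta'k : R)
    (t : ℕ) (d : Fin (L + 1)) (lam : Fin (L + 1) → ℕ) : R :=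
  ((2 : ℚ) ^ lk k lam)⁻¹ •
    ∑ᶠ nn : Fin (L + 1) → Fin (L + 1) → ℕ,
      coefRD (Dlam k lam) nn • starval theta etak eta'k t d lam nn

/-- the determinant `S_μ = det(ϑ_{μ_i + j - i})`. -/
def S (theta : ℤ → R) {M : ℕ} (mu : Fin M → ℤ) : R :=
  Matrix.det (Matrix.of fun i j : Fin M => theta (mu i + (j : ℕ) - (i : ℕ)))

end

end Stmt12

namespace Stmt12Aux
open Stmt12 Finset

noncomputable section

variable {R : Type*} [CommRing R] [Algebra ℚ R]

def Pn (n : ℕ) : Finset (Fin n × Fin n) := Finset.univ.filter fun q => q.1 < q.2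

lemma mem_Pn {n : ℕ} (q : Fin n × Fin n) : q ∈ Pn n ↔ q.1 < q.2 := by
  simp [Pn]

def ind {n : ℕ} (E : Finset (Fin n × Fin n)) : Fin n → Fin n → ℕ :=
  fun i j => if (i, j) ∈ E then 1 else 0

lemma ind_injective {n : ℕ} : Function.Injective (ind (n := n)) := by
  intro E F h
  ext q
  have h2 := congrFun (congrFun h q.1) q.2
  by_cases hE : q ∈ E <;> by_cases hF : q ∈ F <;>
    simp_all [ind, hE, hF]

lemma prod_Pn {M : Type*} [CommMonoid M] {n : ℕ} (f : Fin n × Fin n → M) :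
    ∏ q ∈ Pn n, f q = ∏ i, ∏ j ∈ Finset.Ioi i, f (i, j) := by
  have hIoi : ∀ i : Fin n, Finset.Ioi i = Finset.univ.filter (i < ·) := by
    intro i; ext j; simp
  rw [Pn, prod_filter, Fintype.prod_prod_type]
  refine Finset.prod_congr rfl fun i _ => ?_
  rw [hIoi, prod_filter]

lemma sum_ind_row {n : ℕ} (E : Finset (Fin n × Fin n)) (i : Fin n) :
    ∑ j, (ind E i j : ℤ) = ∑ q ∈ E, (if i = q.1 then 1 else 0) := by
  have h1 : ∀ j, (ind E i j : ℤ) = ∑ q ∈ E, if q = (i, j) then 1 else 0 := by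
    intro j
    rw [Finset.sum_ite_eq' E (i, j) (fun _ => (1 : ℤ))]
    simp [ind]
  simp_rw [h1]
  rw [Finset.sum_comm]
  refine Finset.sum_congr rfl fun q _ => ?_
  rcases q with ⟨a, b⟩
  by_cases ha : i = a
  · subst ha; simp [Prod.ext_iff]
  · have ha' : ¬ a = i := fun h => ha h.symm
    simp [Prod.ext_iff, ha, ha']

lemma sum_ind_col {n : ℕ} (E : Finset (Fin n × Fin n)) (i : Fin n) :
    ∑ h, (ind E h i : ℤ) = ∑ q ∈ E, (if i = q.2 then 1 else 0) := by
  have h1 : ∀ j, (ind E j i : ℤ) = ∑ q ∈ E, if q = (j, i) then 1 else 0 := by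
    intro j
    rw [Finset.sum_ite_eq' E (j, i) (fun _ => (1 : ℤ))]
    simp [ind]
  simp_rw [h1]
  rw [Finset.sum_comm]
  refine Finset.sum_congr rfl fun q _ => ?_
  rcases q with ⟨a, b⟩
  by_cases hb : i = b
  · subst hb; simp [Prod.ext_iff]
  · have hb' : ¬ b = i := fun h => hb h.symm
    simp [Prod.ext_iff, hb, hb']

def vE {n : ℕ} (E : Finset (Fin n × Fin n)) : Fin n → ℤ :=
  ∑ q ∈ E, (Pi.single q.1 (1 : ℤ) - Pi.single q.2 (1 : ℤ))

lemma rapply_ind {n : ℕ} (E : Finset (Fin n × Fin n)) (lam : Fin n → ℤ) (i : Fin n) :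
    rapply (ind E) lam i = lam i + vE E i := by
  have key : vE E i
      = (∑ q ∈ E, if i = q.1 then (1 : ℤ) else 0)
        - ∑ q ∈ E, if i = q.2 then (1 : ℤ) else 0 := by
    rw [vE, Finset.sum_apply, ← Finset.sum_sub_distrib]
    refine Finset.sum_congr rfl fun q _ => ?_
    simp [Pi.single_apply]
  rw [rapply, sum_ind_row, sum_ind_col, key]; ring

lemma coef_ind {n : ℕ} {E : Finset (Fin n × Fin n)} (hE : E ⊆ Pn n) :
    coefRD (∅ : Finset (Fin n × Fin n)) (ind E) = (-1 : ℚ) ^ E.card := by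
  rw [coefRD,
    ← Fintype.prod_prod_type' (f := fun i j : Fin n => pairCoef (∅ : Finset (Fin n × Fin n)) i j (ind E i j))]
  have h1 : ∀ q : Fin n × Fin n,
      pairCoef (∅ : Finset (Fin n × Fin n)) q.1 q.2 (ind E q.1 q.2)
        = if q ∈ E then (-1 : ℚ) else 1 := by
    intro q
    by_cases hq : q ∈ E
    · have hlt : q.1 < q.2 := (mem_Pn q).mp (hE hq)
      simp [pairCoef, ind, hq, hlt]
    · simp [pairCoef, ind, hq]
  calc ∏ q : Fin n × Fin n, pairCoef (∅ : Finset (Fin n × Fin n)) q.1 q.2 (ind E q.1 q.2)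
      = ∏ q : Fin n × Fin n, (if q ∈ E then (-1 : ℚ) else 1) :=
        Finset.prod_congr rfl fun q _ => h1 q
    _ = (-1 : ℚ) ^ E.card := by
        rw [Finset.prod_ite_mem, Finset.univ_inter, Finset.prod_const]

lemma lemA {n : ℕ} (F : (Fin n → Fin n → ℕ) → R) :
    (∑ᶠ nn : Fin n → Fin n → ℕ, coefRD (∅ : Finset (Fin n × Fin n)) nn • F nn)
      = ∑ E ∈ (Pn n).powerset, ((-1 : ℚ) ^ E.card) • F (ind E) := by
  have hsupp : Function.support (fun nn => coefRD (∅ : Finset (Fin n × Fin n)) nn • F nn)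
      ⊆ ((Pn n).powerset.image ind : Finset (Fin n → Fin n → ℕ)) := by
    intro nn hnn
    have hc : coefRD (∅ : Finset (Fin n × Fin n)) nn ≠ 0 := by
      intro h; apply hnn; simp [h]
    rw [coefRD] at hc
    have h1 : ∀ i j, pairCoef (∅ : Finset (Fin n × Fin n)) i j (nn i j) ≠ 0 := by
      intro i j
      have h2 := Finset.prod_ne_zero_iff.mp hc i (Finset.mem_univ i)
      exact Finset.prod_ne_zero_iff.mp h2 j (Finset.mem_univ j)
    have h2 : ∀ i j : Fin n, (i < j ∧ nn i j ≤ 1) ∨ (¬ i < j ∧ nn i j = 0) := by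
      intro i j
      have := h1 i j
      by_cases hij : i < j
      · left; refine ⟨hij, ?_⟩
        by_contra hgt
        push_neg at hgt
        have hm0 : nn i j ≠ 0 := by omega
        have hm1 : nn i j ≠ 1 := by omega
        simp [pairCoef, hij, hm0, hm1] at this
      · right; refine ⟨hij, ?_⟩
        by_contra hne
        simp [pairCoef, hij, hne] at this
    set E : Finset (Fin n × Fin n) := (Pn n).filter fun q => nn q.1 q.2 = 1 with hEdef
    have hmem : E ∈ (Pn n).powerset := Finset.mem_powerset.mpr (Finset.filter_subset _ _)
    refine Finset.mem_coe.mpr (Finset.mem_image.mpr ⟨E, hmem, ?_⟩)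
    funext i j
    rcases h2 i j with ⟨hij, hle⟩ | ⟨hij, h0⟩
    · rcases Nat.le_one_iff_eq_zero_or_eq_one.mp hle with h | h
      · simp [ind, hEdef, mem_Pn, h]
      · simp [ind, hEdef, mem_Pn, hij, h]
    · have hnot : (i, j) ∉ E := by
        simp [hEdef, mem_Pn]
        intro h; exact absurd h hij
      simp [ind, hnot, h0]
  rw [finsum_eq_sum_of_support_subset _ hsupp,
    Finset.sum_image (fun E _ F _ h => ind_injective h)]
  refine Finset.sum_congr rfl fun E hE => ?_
  rw [coef_ind (Finset.mem_powerset.mp hE)]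



abbrev Amod (n : ℕ) := AddMonoidAlgebra ℚ (Fin n → ℤ)

def X {n : ℕ} (a : Fin n → ℤ) : Amod n := AddMonoidAlgebra.single a 1

lemma X_mul {n : ℕ} (a b : Fin n → ℤ) : X a * X b = X (a + b) := by
  rw [X, X, X, AddMonoidAlgebra.single_mul_single, mul_one]

lemma X_zero {n : ℕ} : X (0 : Fin n → ℤ) = 1 := (AddMonoidAlgebra.one_def).symm

lemma X_pow {n : ℕ} (a : Fin n → ℤ) (m : ℕ) : X a ^ m = X (m • a) := by
  rw [X, X, AddMonoidAlgebra.single_pow, one_pow]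

lemma X_prod {n : ℕ} {ι : Type*} (s : Finset ι) (f : ι → (Fin n → ℤ)) :
    ∏ q ∈ s, X (f q) = X (∑ q ∈ s, f q) := by
  classical
  induction s using Finset.cons_induction with
  | empty => simp [X_zero]
  | cons a s ha ih => rw [Finset.prod_cons, Finset.sum_cons, ih, X_mul]

/-- the linear map sending `X a` to `∏ i, θ (λ i + a i)`. -/
def T {n : ℕ} (theta : ℤ → R) (lam : Fin n → ℤ) : Amod n →ₗ[ℚ] R :=
  Finsupp.linearCombination ℚ (fun a : Fin n → ℤ => ∏ i, theta (lam i + a i)) ∘ₗ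
    (AddMonoidAlgebra.coeffLinearEquiv ℚ).toLinearMap

lemma T_X {n : ℕ} (theta : ℤ → R) (lam : Fin n → ℤ) (a : Fin n → ℤ) :
    T theta lam (X a) = ∏ i, theta (lam i + a i) := by
  rw [T, X]
  show (Finsupp.linearCombination ℚ fun a : Fin n → ℤ => ∏ i, theta (lam i + a i))
      (Finsupp.single a (1 : ℚ)) = _
  rw [Finsupp.linearCombination_single, one_smul]

lemma sum_e2 (n : ℕ) :
    ∑ q ∈ Pn n, Pi.single q.2 (1 : ℤ) = fun j : Fin n => ((j : ℕ) : ℤ) := by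
  funext m
  rw [Finset.sum_apply]
  simp_rw [Pi.single_apply]
  rw [Finset.sum_boole]
  have h2 : (Pn n).filter (fun q => m = q.2) = (Finset.Iio m).image (fun i => (i, m)) := by
    ext q
    simp only [Finset.mem_filter, mem_Pn, Finset.mem_image, Finset.mem_Iio]
    constructor
    · rintro ⟨hlt, rfl⟩; exact ⟨q.1, hlt, rfl⟩
    · rintro ⟨i, hi, rfl⟩; exact ⟨hi, rfl⟩
  rw [h2, Finset.card_image_of_injective _ (fun a b h => (Prod.ext_iff.mp h).1),
    Fin.card_Iio]

lemma expand_prod (n : ℕ) :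
    ∏ q ∈ Pn n, (1 - X (Pi.single q.1 (1 : ℤ) - Pi.single q.2 1))
      = ∑ E ∈ (Pn n).powerset, ((-1 : ℚ) ^ E.card) • X (vE E) := by
  have h0 : ∀ q ∈ Pn n, (1 - X (Pi.single q.1 (1 : ℤ) - Pi.single q.2 1))
      = (-X (Pi.single q.1 (1 : ℤ) - Pi.single q.2 1)) + 1 := fun q _ => by ring
  rw [Finset.prod_congr rfl h0, Finset.prod_add]
  refine Finset.sum_congr rfl fun E hE => ?_
  rw [Finset.prod_const_one, mul_one]
  have h1 : ∏ q ∈ E, (-X (Pi.single q.1 (1 : ℤ) - Pi.single q.2 1))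
      = (-1 : Amod n) ^ E.card * X (vE E) := by
    have hcong : ∀ q ∈ E, (-X (Pi.single q.1 (1 : ℤ) - Pi.single q.2 1))
        = (-1 : Amod n) * X (Pi.single q.1 (1 : ℤ) - Pi.single q.2 1) := fun q _ => by ring
    rw [Finset.prod_congr rfl hcong, Finset.prod_mul_distrib, Finset.prod_const, X_prod]
    rfl
  rw [h1, Algebra.smul_def, map_pow, map_neg, map_one]

lemma prod_sub_mul_Xdelta (n : ℕ) :
    (∏ q ∈ Pn n, (1 - X (Pi.single q.1 (1 : ℤ) - Pi.single q.2 1)))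
        * X (fun j : Fin n => ((j : ℕ) : ℤ))
      = ∑ σ : Equiv.Perm (Fin n), ((Equiv.Perm.sign σ : ℤ) : Amod n)
          * X (fun m => (((σ⁻¹ m : Fin n) : ℕ) : ℤ)) := by
  have hXδ : X (fun j : Fin n => ((j : ℕ) : ℤ)) = ∏ q ∈ Pn n, X (Pi.single q.2 (1 : ℤ)) := by
    rw [X_prod, sum_e2]
  rw [hXδ, ← Finset.prod_mul_distrib]
  have h1 : ∀ q ∈ Pn n, (1 - X (Pi.single q.1 (1 : ℤ) - Pi.single q.2 1))
        * X (Pi.single q.2 (1 : ℤ))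
      = X (Pi.single q.2 (1 : ℤ)) - X (Pi.single q.1 (1 : ℤ)) := by
    intro q _
    rw [sub_mul, one_mul, X_mul, sub_add_cancel]
  rw [Finset.prod_congr rfl h1, prod_Pn (fun q : Fin n × Fin n =>
    X (Pi.single q.2 (1 : ℤ)) - X (Pi.single q.1 (1 : ℤ)))]
  rw [← Matrix.det_vandermonde (fun i : Fin n => X (Pi.single i (1 : ℤ))),
    Matrix.det_apply']
  refine Finset.sum_congr rfl fun σ _ => ?_
  congr 1
  have h2 : ∀ i : Fin n, Matrix.vandermonde (fun i : Fin n => X (Pi.single i (1 : ℤ))) (σ i) i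
      = X (((i : ℕ) • Pi.single (σ i) (1 : ℤ))) := by
    intro i
    rw [Matrix.vandermonde_apply, X_pow]
  rw [Finset.prod_congr rfl (fun i _ => h2 i), X_prod]
  congr 1
  funext m
  rw [Finset.sum_apply]
  rw [Finset.sum_eq_single (σ⁻¹ m)]
  · simp [Pi.single_apply]
  · intro i _ hne
    have : ¬ m = σ i := by
      intro h; exact hne (by rw [h]; simp)
    simp [Pi.single_apply, this]
  · intro h; exact absurd (Finset.mem_univ _) h

lemma keyA (n : ℕ) :
    ∑ E ∈ (Pn n).powerset, ((-1 : ℚ) ^ E.card) • X (vE E)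
      = ∑ σ : Equiv.Perm (Fin n), ((Equiv.Perm.sign σ : ℤ)) •
          X (fun m => (((σ⁻¹ m : Fin n) : ℕ) : ℤ) - ((m : ℕ) : ℤ)) := by
  set δ : Fin n → ℤ := fun j : Fin n => ((j : ℕ) : ℤ) with hδ
  have hcancel : ∀ y z : Amod n, y * X δ = z * X δ → y = z := by
    intro y z h
    have h2 := congrArg (· * X (-δ)) h
    simpa [mul_assoc, X_mul, X_zero] using h2
  refine hcancel _ _ ?_
  rw [← expand_prod, prod_sub_mul_Xdelta]
  rw [Finset.sum_mul]
  refine Finset.sum_congr rfl fun σ _ => ?_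
  rw [smul_mul_assoc, X_mul, zsmul_eq_mul]
  congr 2
  funext m
  simp [hδ]

lemma lemB {n : ℕ} (theta : ℤ → R) (lam : Fin n → ℤ) :
    ∑ E ∈ (Pn n).powerset, ((-1 : ℚ) ^ E.card) • ∏ i, theta (rapply (ind E) lam i)
      = S theta lam := by
  have h := congrArg (T theta lam) (keyA n)
  rw [map_sum, map_sum] at h
  simp_rw [map_smul, map_zsmul, T_X] at h
  calc ∑ E ∈ (Pn n).powerset, ((-1 : ℚ) ^ E.card) • ∏ i, theta (rapply (ind E) lam i)
      = ∑ E ∈ (Pn n).powerset, ((-1 : ℚ) ^ E.card) • ∏ i, theta (lam i + vE E i) := by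
        refine Finset.sum_congr rfl fun E _ => ?_
        congr 1
        exact Finset.prod_congr rfl fun i _ => by rw [rapply_ind]
    _ = ∑ σ : Equiv.Perm (Fin n), ((Equiv.Perm.sign σ : ℤ)) •
          ∏ m, theta (lam m + ((((σ⁻¹ m : Fin n) : ℕ) : ℤ) - ((m : ℕ) : ℤ))) := h
    _ = S theta lam := by
        rw [S, Matrix.det_apply']
        refine Finset.sum_congr rfl fun σ _ => ?_
        rw [zsmul_eq_mul]
        congr 1
        rw [← Equiv.prod_comp σ (fun m => theta (lam m + ((((σ⁻¹ m : Fin n) : ℕ) : ℤ) - ((m : ℕ) : ℤ))))]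
        refine Finset.prod_congr rfl fun i _ => ?_
        simp only [Matrix.of_apply, Equiv.Perm.inv_def, Equiv.symm_apply_apply]
        ring_nf



lemma ind_eq_zero_iff {n : ℕ} (E : Finset (Fin n × Fin n)) (i j : Fin n) :
    ind E i j = 0 ↔ (i, j) ∉ E := by
  by_cases h : (i, j) ∈ E <;> simp [ind, h]

def sh {L : ℕ} (E : Finset (Fin L × Fin L)) : Finset (Fin (L + 1) × Fin (L + 1)) :=
  E.image fun q => (q.1.succ, q.2.succ)

/-- the predicate "the exponent matrix of `E` touches the index `0`". -/
def tch {L : ℕ} (E : Finset (Fin (L + 1) × Fin (L + 1))) : Prop :=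
  (∃ j, ind E (0 : Fin (L + 1)) j ≠ 0) ∨ (∃ i, ind E i (0 : Fin (L + 1)) ≠ 0)

instance {L : ℕ} : DecidablePred (tch (L := L)) := fun _ => by unfold tch; infer_instance

lemma not_tch_iff {L : ℕ} (E : Finset (Fin (L + 1) × Fin (L + 1))) :
    ¬ tch E ↔ ∀ q ∈ E, q.1 ≠ 0 ∧ q.2 ≠ 0 := by
  rw [tch]
  push_neg
  constructor
  · rintro ⟨h1, h2⟩ ⟨a, b⟩ hq
    constructor
    · intro h; subst h; exact absurd ((ind_eq_zero_iff E _ _).mp (h1 b)) (by simpa using hq)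
    · intro h; subst h; exact absurd ((ind_eq_zero_iff E _ _).mp (h2 a)) (by simpa using hq)
  · intro h
    constructor
    · intro j; rw [ind_eq_zero_iff]; intro hq; exact (h _ hq).1 rfl
    · intro i; rw [ind_eq_zero_iff]; intro hq; exact (h _ hq).2 rfl

lemma ind_succ_succ {L : ℕ} (E : Finset (Fin (L + 1) × Fin (L + 1)))
    (hE : E ⊆ Pn (L + 1)) (i j : Fin L) :
    ind E i.succ j.succ = ind ((Pn L).filter fun q => (q.1.succ, q.2.succ) ∈ E) i j := by
  unfold ind
  by_cases h : (i.succ, j.succ) ∈ E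
  · have hij : i < j := by
      have := (mem_Pn _).mp (hE h)
      exact Fin.succ_lt_succ_iff.mp this
    have h2 : (i, j) ∈ (Pn L).filter fun q => (q.1.succ, q.2.succ) ∈ E :=
      Finset.mem_filter.mpr ⟨(mem_Pn (i, j)).mpr hij, h⟩
    rw [if_pos h, if_pos h2]
  · have h2 : (i, j) ∉ (Pn L).filter fun q => (q.1.succ, q.2.succ) ∈ E :=
      fun hc => h (Finset.mem_filter.mp hc).2
    rw [if_neg h, if_neg h2]

lemma rapply_succ {L : ℕ} (E : Finset (Fin (L + 1) × Fin (L + 1)))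
    (hE : E ⊆ Pn (L + 1)) (hn : ¬ tch E) (lam : Fin (L + 1) → ℤ) (i : Fin L) :
    rapply (ind E) lam i.succ
      = rapply (ind ((Pn L).filter fun q => (q.1.succ, q.2.succ) ∈ E))
          (fun p => lam p.succ) i := by
  have hnt := (not_tch_iff E).mp hn
  have hrow : ind E i.succ 0 = 0 := by
    rw [ind_eq_zero_iff]; intro hq; exact (hnt _ hq).2 rfl
  have hcol : ind E 0 i.succ = 0 := by
    rw [ind_eq_zero_iff]; intro hq; exact (hnt _ hq).1 rfl
  rw [rapply, rapply]
  rw [Fin.sum_univ_succ (f := fun j => (ind E i.succ j : ℤ)),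
    Fin.sum_univ_succ (f := fun h => (ind E h i.succ : ℤ))]
  rw [hrow, hcol]
  simp_rw [ind_succ_succ E hE]
  push_cast
  ring

lemma rapply_zero {L : ℕ} (E : Finset (Fin (L + 1) × Fin (L + 1)))
    (hn : ¬ tch E) (lam : Fin (L + 1) → ℤ) :
    rapply (ind E) lam 0 = lam 0 := by
  have hnt := (not_tch_iff E).mp hn
  have hrow : ∀ j, ind E 0 j = 0 := by
    intro j; rw [ind_eq_zero_iff]; intro hq; exact (hnt _ hq).1 rfl
  have hcol : ∀ h, ind E h 0 = 0 := by
    intro h; rw [ind_eq_zero_iff]; intro hq; exact (hnt _ hq).2 rfl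
  rw [rapply]
  simp [hrow, hcol]

lemma succ_pair_injective {L : ℕ} :
    Function.Injective (fun q : Fin L × Fin L => (q.1.succ, q.2.succ)) := by
  rintro ⟨a, b⟩ ⟨c, d⟩ h
  simp only [Prod.mk.injEq] at h
  exact Prod.ext (Fin.succ_injective _ h.1) (Fin.succ_injective _ h.2)

lemma sh_un {L : ℕ} (E : Finset (Fin (L + 1) × Fin (L + 1)))
    (hsub : E ⊆ Pn (L + 1)) (hnt : ¬ tch E) :
    sh ((Pn L).filter fun q => (q.1.succ, q.2.succ) ∈ E) = E := by
  have hnt' := (not_tch_iff E).mp hnt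
  ext q
  rw [sh, Finset.mem_image]
  constructor
  · rintro ⟨p, hp, rfl⟩
    exact (Finset.mem_filter.mp hp).2
  · intro hq
    obtain ⟨h1, h2⟩ := hnt' q hq
    obtain ⟨a, ha⟩ := Fin.exists_succ_eq_of_ne_zero h1
    obtain ⟨b, hb⟩ := Fin.exists_succ_eq_of_ne_zero h2
    refine ⟨(a, b), Finset.mem_filter.mpr ⟨?_, ?_⟩, by simp [ha, hb]⟩
    · rw [mem_Pn]
      have := (mem_Pn q).mp (hsub hq)
      rw [← ha, ← hb] at this
      exact Fin.succ_lt_succ_iff.mp this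
    · simpa [ha, hb] using hq

lemma sum_notouch {L : ℕ} (theta : ℤ → R) (lam : Fin (L + 1) → ℤ) :
    ∑ E ∈ (Pn (L + 1)).powerset.filter (fun E => ¬ tch E),
      ((-1 : ℚ) ^ E.card) • ∏ i : Fin L, theta (rapply (ind E) lam i.succ)
    = S theta (fun i : Fin L => lam i.succ) := by
  rw [← lemB theta (fun i : Fin L => lam i.succ)]
  refine Finset.sum_nbij'
    (i := fun E => (Pn L).filter fun q => (q.1.succ, q.2.succ) ∈ E)
    (j := sh) ?_ ?_ ?_ ?_ ?_
  · intro E _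
    exact Finset.mem_powerset.mpr (Finset.filter_subset _ _)
  · intro E' hE'
    have hsub := Finset.mem_powerset.mp hE'
    rw [Finset.mem_filter]
    constructor
    · rw [Finset.mem_powerset]
      intro q hq
      rw [sh, Finset.mem_image] at hq
      obtain ⟨p, hp, rfl⟩ := hq
      rw [mem_Pn]
      exact Fin.succ_lt_succ_iff.mpr ((mem_Pn p).mp (hsub hp))
    · rw [not_tch_iff]
      rintro ⟨a, b⟩ hq
      rw [sh, Finset.mem_image] at hq
      obtain ⟨p, _, hpe⟩ := hq
      simp only [Prod.mk.injEq] at hpe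
      exact ⟨hpe.1 ▸ Fin.succ_ne_zero _, hpe.2 ▸ Fin.succ_ne_zero _⟩
  · intro E hE
    rw [Finset.mem_filter, Finset.mem_powerset] at hE
    exact sh_un E hE.1 hE.2
  · intro E' hE'
    have hsub := Finset.mem_powerset.mp hE'
    ext ⟨a, b⟩
    rw [Finset.mem_filter, mem_Pn]
    constructor
    · rintro ⟨_, hmem⟩
      rw [sh, Finset.mem_image] at hmem
      obtain ⟨p, hp, hpe⟩ := hmem
      have := succ_pair_injective hpe
      rwa [← this]
    · intro hab
      refine ⟨(mem_Pn (a, b)).mp (hsub hab), ?_⟩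
      rw [sh, Finset.mem_image]
      exact ⟨(a, b), hab, rfl⟩
  · intro E hE
    rw [Finset.mem_filter, Finset.mem_powerset] at hE
    obtain ⟨hsub, hnt⟩ := hE
    have hcard : E.card = ((Pn L).filter fun q => (q.1.succ, q.2.succ) ∈ E).card := by
      conv_lhs => rw [← sh_un E hsub hnt]
      rw [sh, Finset.card_image_of_injective _ succ_pair_injective]
    rw [← hcard]
    congr 1
    exact Finset.prod_congr rfl fun i _ => by rw [rapply_succ E hsub hnt lam i]


lemma tch_def {L : ℕ} (E : Finset (Fin (L + 1) × Fin (L + 1))) :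
    tch E ↔ ((∃ j, ind E (0 : Fin (L + 1)) j ≠ 0) ∨ (∃ i, ind E i (0 : Fin (L + 1)) ≠ 0)) :=
  Iff.rfl

lemma exists_pred {L : ℕ} (i : Fin (L + 1)) (h : i ≠ 0) :
    ∃ i0 : Fin (L + 1), i0 < i ∧ (i : ℕ) = (i0 : ℕ) + 1 := by
  obtain ⟨j, hj⟩ := Fin.exists_succ_eq_of_ne_zero h
  refine ⟨j.castSucc, ?_, ?_⟩
  · rw [← hj]; exact Fin.castSucc_lt_succ
  · rw [← hj]; simp

lemma typed_case {L : ℕ} (theta : ℤ → R) (eta : R) (lam' : Fin (L + 1) → ℤ) :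
    ∑ E ∈ (Pn (L + 1)).powerset, ((-1 : ℚ) ^ E.card) •
      (if tch E then (1 / 2 : ℚ) • ∏ i, theta (rapply (ind E) lam' i)
       else eta * ∏ i : Fin L, theta (rapply (ind E) lam' i.succ))
    = (1 / 2 : ℚ) • S theta lam'
      - (1 / 2 : ℚ) • (theta (lam' 0) * S theta (fun i : Fin L => lam' i.succ))
      + eta * S theta (fun i : Fin L => lam' i.succ) := by
  classical
  have hB : ∑ E ∈ (Pn (L + 1)).powerset.filter (fun E => ¬ tch E),
      ((-1 : ℚ) ^ E.card) • ∏ i, theta (rapply (ind E) lam' i)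
      = theta (lam' 0) * S theta (fun i : Fin L => lam' i.succ) := by
    rw [← sum_notouch theta lam', Finset.mul_sum]
    refine Finset.sum_congr rfl fun E hE => ?_
    rw [Finset.mem_filter] at hE
    rw [Fin.prod_univ_succ (f := fun i => theta (rapply (ind E) lam' i)),
      rapply_zero E hE.2 lam', mul_smul_comm]
  have hA : ∑ E ∈ (Pn (L + 1)).powerset.filter tch,
      ((-1 : ℚ) ^ E.card) • ∏ i, theta (rapply (ind E) lam' i)
      = S theta lam' - theta (lam' 0) * S theta (fun i : Fin L => lam' i.succ) := by
    rw [eq_sub_iff_add_eq, ← hB, Finset.sum_filter_add_sum_filter_not]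
    exact lemB theta lam'
  rw [← Finset.sum_filter_add_sum_filter_not ((Pn (L + 1)).powerset) tch]
  have h1 : ∑ E ∈ (Pn (L + 1)).powerset.filter tch, ((-1 : ℚ) ^ E.card) •
      (if tch E then (1 / 2 : ℚ) • ∏ i, theta (rapply (ind E) lam' i)
       else eta * ∏ i : Fin L, theta (rapply (ind E) lam' i.succ))
      = (1 / 2 : ℚ) •
          (S theta lam' - theta (lam' 0) * S theta (fun i : Fin L => lam' i.succ)) := by
    rw [← hA, Finset.smul_sum]
    refine Finset.sum_congr rfl fun E hE => ?_
    rw [Finset.mem_filter] at hE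
    rw [if_pos hE.2]
    exact smul_comm _ _ _
  have h2 : ∑ E ∈ (Pn (L + 1)).powerset.filter (fun E => ¬ tch E), ((-1 : ℚ) ^ E.card) •
      (if tch E then (1 / 2 : ℚ) • ∏ i, theta (rapply (ind E) lam' i)
       else eta * ∏ i : Fin L, theta (rapply (ind E) lam' i.succ))
      = eta * S theta (fun i : Fin L => lam' i.succ) := by
    rw [← sum_notouch theta lam', Finset.mul_sum]
    refine Finset.sum_congr rfl fun E hE => ?_
    rw [Finset.mem_filter] at hE
    rw [if_neg hE.2, mul_smul_comm]
  rw [h1, h2, smul_sub]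

end
end Stmt12Aux

open Stmt12 Stmt12Aux in
theorem stmt12 (R : Type*) [CommRing R] [Algebra ℚ R]
    (k : ℕ) (hk : 1 ≤ k)
    (theta : ℤ → R) (hthneg : ∀ r : ℤ, r < 0 → theta r = 0)
    (ek : R) (etak eta'k : R)
    (hetak : etak = (1 / 2 : ℚ) • (theta k + ek))
    (heta'k : eta'k = (1 / 2 : ℚ) • (theta k - ek))
    (L : ℕ) (lam : Fin (L + 1) → ℕ)
    (hanti : Antitone lam) (hpos : ∀ i, 0 < lam i)
    (hstrict : ∀ i j : Fin (L + 1), i < j → k < lam i → lam i ≠ lam j)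
    (t : ℕ) (ht : t ≤ 2) (htype : t ≠ 0 ↔ ∃ i, lam i = k)
    (d : Fin (L + 1)) (hd : t ≠ 0 → (lam d = k ∧ ∀ i, i < d → k < lam i))
    (hlow : ∀ i j : Fin (L + 1), i < j →
      lam i + lam j + (i : ℕ) < 2 * k + (j : ℕ)) :
    (lam 0 < k →
      H k theta etak eta'k t d lam = S theta (fun i => (lam i : ℤ))) ∧
    (t = 1 →
      H k theta etak eta'k t d lam =
        (1 / 2 : ℚ) • S theta (fun i => (lam i : ℤ)) +
        (1 / 2 : ℚ) • (ek * S theta (fun i : Fin L => (lam (d.succAbove i) : ℤ)))) ∧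
    (t = 2 →
      H k theta etak eta'k t d lam =
        (1 / 2 : ℚ) • S theta (fun i => (lam i : ℤ)) -
        (1 / 2 : ℚ) • (ek * S theta (fun i : Fin L => (lam (d.succAbove i) : ℤ)))) ∧
    (k < lam 0 →
      H k theta etak eta'k t d lam = (1 / 2 : ℚ) • S theta (fun i => (lam i : ℤ))) := by
  classical
  have hD : Dlam k lam = ∅ := by
    rw [Dlam, Finset.filter_eq_empty_iff]
    rintro q - ⟨h1, h2⟩
    have := hlow q.1 q.2 h1
    omega
  refine ⟨?_, ?_, ?_, ?_⟩
  · -- case λ₁ < k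
    intro h0
    have hall : ∀ i, lam i < k := fun i => lt_of_le_of_lt (hanti (Fin.zero_le i)) h0
    have ht0 : t = 0 := by
      by_contra h
      obtain ⟨i, hi⟩ := htype.mp h
      exact absurd hi (Nat.ne_of_lt (hall i))
    have hlk : lk k lam = 0 := by
      rw [lk, Finset.card_eq_zero, Finset.filter_eq_empty_iff]
      intro i _
      exact not_lt.mpr (le_of_lt (hall i))
    subst ht0
    rw [H, hlk, pow_zero, inv_one, one_smul]
    simp only [hD]
    rw [lemA (starval theta etak eta'k 0 d lam)]
    have hsv : ∀ E ∈ (Pn (L + 1)).powerset,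
        ((-1 : ℚ) ^ E.card) • starval theta etak eta'k 0 d lam (ind E)
        = ((-1 : ℚ) ^ E.card) • ∏ i, theta (rapply (ind E) (fun i => (lam i : ℤ)) i) := by
      intro E _
      simp only [starval, reduceIte]
    rw [Finset.sum_congr rfl hsv]
    exact lemB theta fun i => (lam i : ℤ)
  · -- case type 1
    intro ht1
    subst ht1
    obtain ⟨hdk, hdlt⟩ := hd one_ne_zero
    have hd0 : d = 0 := by
      by_contra hne
      obtain ⟨i0, hlt, hval⟩ := exists_pred d hne
      have h1 := hdlt i0 hlt
      have h2 := hlow i0 d hlt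
      omega
    subst hd0
    have hlk : lk k lam = 0 := by
      rw [lk, Finset.card_eq_zero, Finset.filter_eq_empty_iff]
      intro i _
      have h3 : lam i ≤ lam 0 := hanti (Fin.zero_le i)
      omega
    rw [H, hlk, pow_zero, inv_one, one_smul]
    simp only [hD]
    rw [lemA (starval theta etak eta'k 1 0 lam)]
    have hsv : ∀ E ∈ (Pn (L + 1)).powerset,
        ((-1 : ℚ) ^ E.card) • starval theta etak eta'k 1 0 lam (ind E)
        = ((-1 : ℚ) ^ E.card) •
          (if tch E then (1 / 2 : ℚ) • ∏ i, theta (rapply (ind E) (fun i => (lam i : ℤ)) i)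
           else etak * ∏ i : Fin L, theta (rapply (ind E) (fun i => (lam i : ℤ)) i.succ)) := by
      intro E _
      congr 1
    rw [Finset.sum_congr rfl hsv, typed_case theta etak (fun i => (lam i : ℤ))]
    simp only [Fin.succAbove_zero]
    rw [show ((lam 0 : ℕ) : ℤ) = (k : ℤ) from Nat.cast_inj.mpr hdk]
    rw [hetak, smul_mul_assoc, add_mul, smul_add]
    abel
  · -- case type 2
    intro ht2
    subst ht2
    obtain ⟨hdk, hdlt⟩ := hd two_ne_zero
    have hd0 : d = 0 := by
      by_contra hne
      obtain ⟨i0, hlt, hval⟩ := exists_pred d hne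
      have h1 := hdlt i0 hlt
      have h2 := hlow i0 d hlt
      omega
    subst hd0
    have hlk : lk k lam = 0 := by
      rw [lk, Finset.card_eq_zero, Finset.filter_eq_empty_iff]
      intro i _
      have h3 : lam i ≤ lam 0 := hanti (Fin.zero_le i)
      omega
    rw [H, hlk, pow_zero, inv_one, one_smul]
    simp only [hD]
    rw [lemA (starval theta etak eta'k 2 0 lam)]
    have hsv : ∀ E ∈ (Pn (L + 1)).powerset,
        ((-1 : ℚ) ^ E.card) • starval theta etak eta'k 2 0 lam (ind E)
        = ((-1 : ℚ) ^ E.card) •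
          (if tch E then (1 / 2 : ℚ) • ∏ i, theta (rapply (ind E) (fun i => (lam i : ℤ)) i)
           else eta'k * ∏ i : Fin L, theta (rapply (ind E) (fun i => (lam i : ℤ)) i.succ)) := by
      intro E _
      congr 1
    rw [Finset.sum_congr rfl hsv, typed_case theta eta'k (fun i => (lam i : ℤ))]
    simp only [Fin.succAbove_zero]
    rw [show ((lam 0 : ℕ) : ℤ) = (k : ℤ) from Nat.cast_inj.mpr hdk]
    rw [heta'k, smul_mul_assoc, sub_mul, smul_sub]
    abel
  · -- case λ₁ > k
    intro h0
    have ht0 : t = 0 := by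
      by_contra h
      obtain ⟨hdk, hdlt⟩ := hd h
      have hdne : d ≠ 0 := by
        intro hh
        rw [hh] at hdk
        omega
      obtain ⟨i0, hlt, hval⟩ := exists_pred d hdne
      have h1 := hdlt i0 hlt
      have h2 := hlow i0 d hlt
      omega
    subst ht0
    have hone : ∀ i : Fin (L + 1), i ≠ 0 → lam i ≤ k := by
      intro i hi
      by_contra hgt
      push_neg at hgt
      obtain ⟨i0, hlt, hval⟩ := exists_pred i hi
      have h1 : k < lam i0 := lt_of_lt_of_le hgt (hanti (le_of_lt hlt))
      have h2 := hlow i0 i hlt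
      omega
    have hlk : lk k lam = 1 := by
      rw [lk]
      rw [show Finset.univ.filter (fun i : Fin (L + 1) => k < lam i) = {0} from ?_]
      · exact Finset.card_singleton 0
      · ext i
        simp only [Finset.mem_filter, Finset.mem_univ, true_and, Finset.mem_singleton]
        constructor
        · intro hki
          by_contra hne
          exact absurd (hone i hne) (not_le.mpr hki)
        · rintro rfl; exact h0
    rw [H, hlk, pow_one]
    simp only [hD]
    rw [lemA (starval theta etak eta'k 0 d lam)]
    have hsv : ∀ E ∈ (Pn (L + 1)).powerset,
        ((-1 : ℚ) ^ E.card) • starval theta etak eta'k 0 d lam (ind E)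
        = ((-1 : ℚ) ^ E.card) • ∏ i, theta (rapply (ind E) (fun i => (lam i : ℤ)) i) := by
      intro E _
      simp only [starval, reduceIte]
    rw [Finset.sum_congr rfl hsv, lemB theta fun i => (lam i : ℤ)]
    rw [show ((2 : ℚ))⁻¹ = (1 / 2 : ℚ) by norm_num]
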